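/- Let d ≥ 1 and m : Fin d → ℕ with m i ≥ 1, and equip the space of d-mode real tensors T : (Π i : Fin d, Fin (m i)) → ℝ with the Hilbert–Schmidt norm and Lebesgue measure. Let C(m) be the set of all rank-one tensors ⊗_i x_i together with the zero tensor, i.e., C(m) = { S : ∃ x with x i ∈ ℝ^{m i}, S(idx) = ∏_i (x i)(idx i) for all idx }. Then for Lebesgue-almost every tensor T there exists a unique S ∈ C(m) with ‖T − S‖ = dist(T, C(m)); that is, almost every real d-mode tensor has a unique best rank one approximation. -/

import Mathlib

open MeasureTheory Metric

/-- The set of rank one tensors (including zero) in the space of `d`-mode real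
tensors with the Hilbert–Schmidt norm. -/
def rankOneSet {d : ℕ} (m : Fin d → ℕ) :
    Set (EuclideanSpace ℝ (∀ i, Fin (m i))) :=
  {S | ∃ x : ∀ i, Fin (m i) → ℝ, ∀ idx, S idx = ∏ i, x i (idx i)}

section Aux

variable {E : Type*} [NormedAddCommGroup E] [InnerProductSpace ℝ E]

/-- If the distance function to `C` is differentiable at `x`, its derivative in the
direction of a nearest point equals minus the distance. -/
lemma fderiv_infDist_nearest {C : Set E} {x y : E} (hy : y ∈ C)
    (he : dist x y = infDist x C)
    (hx : DifferentiableAt ℝ (fun z => infDist z C) x) :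
    fderiv ℝ (fun z => infDist z C) x (y - x) = -(infDist x C) := by
  set f : E → ℝ := fun z => infDist z C with hf
  set v := y - x with hv
  set L := fderiv ℝ f x with hL
  set c := infDist x C with hc
  have hline : HasDerivAt (fun t : ℝ => x + t • v) v 0 := by
    simpa using ((hasDerivAt_id (0:ℝ)).smul_const v).const_add x
  have hx' : HasFDerivAt f L ((fun t : ℝ => x + t • v) 0) := by
    simpa using hx.hasFDerivAt
  have hg : HasDerivAt (fun t : ℝ => f (x + t • v)) (L v) 0 :=
    by have := hx'.comp_hasDerivAt 0 hline; exact this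
  have hnv : ‖v‖ = c := by
    rw [hv, norm_sub_rev, ← dist_eq_norm, he]
  have gval : ∀ t ∈ Set.Icc (0:ℝ) 1, f (x + t • v) = (1 - t) * c := by
    intro t ht
    have hle : f (x + t • v) ≤ (1 - t) * c := by
      have h1 : f (x + t • v) ≤ dist (x + t • v) y := infDist_le_dist_of_mem hy
      have h2 : dist (x + t • v) y = (1 - t) * c := by
        rw [dist_eq_norm]
        have : x + t • v - y = (t - 1) • v := by
          rw [hv]; module
        rw [this, norm_smul, Real.norm_eq_abs, abs_of_nonpos (by linarith [ht.2]), hnv]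
        ring
      linarith [h2 ▸ h1]
    have hge : (1 - t) * c ≤ f (x + t • v) := by
      have h1 : c ≤ f (x + t • v) + dist x (x + t • v) := infDist_le_infDist_add_dist
      have h2 : dist x (x + t • v) = t * c := by
        rw [dist_eq_norm]
        have : x - (x + t • v) = (-t) • v := by module
        rw [this, norm_smul, Real.norm_eq_abs, abs_of_nonpos (by linarith [ht.1]), hnv]
        ring
      linarith
    linarith
  have hmem : (0:ℝ) ∈ Set.Icc (0:ℝ) 1 := ⟨le_refl _, zero_le_one⟩
  have hud : UniqueDiffWithinAt ℝ (Set.Icc (0:ℝ) 1) 0 := uniqueDiffOn_Icc one_pos 0 hmem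
  have hgw : HasDerivWithinAt (fun t : ℝ => f (x + t • v)) (L v) (Set.Icc 0 1) 0 :=
    hg.hasDerivWithinAt
  have haff : HasDerivWithinAt (fun t : ℝ => (1 - t) * c) (-c) (Set.Icc (0:ℝ) 1) 0 := by
    have : HasDerivAt (fun t : ℝ => (1 - t) * c) (-c) 0 := by
      simpa using (((hasDerivAt_id (0:ℝ)).const_sub 1).mul_const c)
    exact this.hasDerivWithinAt
  have hgw2 : HasDerivWithinAt (fun t : ℝ => f (x + t • v)) (-c) (Set.Icc 0 1) 0 := by
    refine haff.congr gval ?_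
    simpa using gval 0 hmem
  calc L v = derivWithin (fun t : ℝ => f (x + t • v)) (Set.Icc 0 1) 0 :=
        (hgw.derivWithin hud).symm
    _ = -c := hgw2.derivWithin hud

/-- At a point of differentiability of the distance function, nearest points
in `C` are unique. -/
lemma nearest_unique {C : Set E} {x : E}
    (hx : DifferentiableAt ℝ (fun z => infDist z C) x)
    {y₁ y₂ : E} (h1 : y₁ ∈ C) (h2 : y₂ ∈ C)
    (e1 : dist x y₁ = infDist x C) (e2 : dist x y₂ = infDist x C) : y₁ = y₂ := by
  set f : E → ℝ := fun z => infDist z C with hf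
  set L := fderiv ℝ f x with hL
  set c := infDist x C with hc
  have hc0 : 0 ≤ c := infDist_nonneg
  have hL1 : ‖L‖ ≤ 1 := by
    simpa using hx.hasFDerivAt.le_of_lipschitz (lipschitz_infDist_pt C)
  have k1 := fderiv_infDist_nearest h1 e1 hx
  have k2 := fderiv_infDist_nearest h2 e2 hx
  set v₁ := y₁ - x with hv₁
  set v₂ := y₂ - x with hv₂
  have n1 : ‖v₁‖ = c := by rw [hv₁, norm_sub_rev, ← dist_eq_norm]; exact e1
  have n2 : ‖v₂‖ = c := by rw [hv₂, norm_sub_rev, ← dist_eq_norm]; exact e2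
  have hLv : L (v₁ + v₂) = -(2 * c) := by rw [map_add, k1, k2]; ring
  have hbound : |L (v₁ + v₂)| ≤ ‖v₁ + v₂‖ := by
    calc |L (v₁ + v₂)| = ‖L (v₁ + v₂)‖ := (Real.norm_eq_abs _).symm
      _ ≤ ‖L‖ * ‖v₁ + v₂‖ := L.le_opNorm _
      _ ≤ 1 * ‖v₁ + v₂‖ := mul_le_mul_of_nonneg_right hL1 (norm_nonneg _)
      _ = ‖v₁ + v₂‖ := one_mul _
  have hsum : 2 * c ≤ ‖v₁ + v₂‖ := by
    rw [hLv] at hbound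
    rw [abs_of_nonpos (by linarith)] at hbound
    linarith
  have hinner : c ^ 2 ≤ (inner ℝ v₁ v₂ : ℝ) := by
    have hsq := norm_add_sq_real v₁ v₂
    rw [n1, n2] at hsq
    nlinarith [norm_nonneg (v₁ + v₂)]
  have hzero : ‖v₁ - v₂‖ ^ 2 ≤ 0 := by
    rw [norm_sub_sq_real, n1, n2]; nlinarith
  have hvv : v₁ = v₂ := by
    have h0 : ‖v₁ - v₂‖ = 0 :=
      le_antisymm (by nlinarith [norm_nonneg (v₁ - v₂)]) (norm_nonneg _)
    exact sub_eq_zero.mp (norm_eq_zero.mp h0)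
  have := congrArg (· + x) hvv
  simpa [hv₁, hv₂] using this

end Aux

section Tensor

/-- The rank-one tensor map. -/
noncomputable def tMap {d : ℕ} (m : Fin d → ℕ) (x : ∀ i, Fin (m i) → ℝ) :
    EuclideanSpace ℝ (∀ i, Fin (m i)) :=
  (WithLp.equiv 2 _).symm fun idx => ∏ i, x i (idx i)

lemma tMap_apply {d : ℕ} (m : Fin d → ℕ) (x : ∀ i, Fin (m i) → ℝ)
    (idx : ∀ i, Fin (m i)) : tMap m x idx = ∏ i, x i (idx i) := rfl

lemma mem_rankOneSet_iff {d : ℕ} {m : Fin d → ℕ}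
    {S : EuclideanSpace ℝ (∀ i, Fin (m i))} :
    S ∈ rankOneSet m ↔ ∃ x, S = tMap m x := by
  constructor
  · rintro ⟨x, hx⟩; exact ⟨x, WithLp.ofLp_injective 2 (funext hx)⟩
  · rintro ⟨x, rfl⟩; exact ⟨x, fun idx => rfl⟩

lemma tMap_continuous {d : ℕ} (m : Fin d → ℕ) : Continuous (tMap m) := by
  refine (PiLp.continuous_toLp 2 _).comp ?_
  refine continuous_pi fun idx => ?_
  exact continuous_finset_prod _ fun i _ => (continuous_apply (idx i)).comp (continuous_apply i)

lemma sqrt_prod' {ι : Type*} (s : Finset ι) (f : ι → ℝ) (hf : ∀ i, 0 ≤ f i) :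
    Real.sqrt (∏ i ∈ s, f i) = ∏ i ∈ s, Real.sqrt (f i) := by
  induction s using Finset.cons_induction with
  | empty => simp
  | cons a s ha ih =>
    rw [Finset.prod_cons, Finset.prod_cons, Real.sqrt_mul (hf a), ih]

lemma tMap_norm {d : ℕ} (m : Fin d → ℕ) (x : ∀ i, Fin (m i) → ℝ) :
    ‖tMap m x‖ = ∏ i, Real.sqrt (∑ j, x i j ^ 2) := by
  rw [EuclideanSpace.norm_eq]
  have key : ∑ idx : ∀ i, Fin (m i), ‖tMap m x idx‖ ^ 2 = ∏ i, ∑ j, x i j ^ 2 := by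
    rw [Finset.prod_univ_sum, Fintype.piFinset_univ]
    refine Finset.sum_congr rfl fun idx _ => ?_
    rw [tMap_apply, Real.norm_eq_abs, sq_abs, ← Finset.prod_pow]
  rw [key, sqrt_prod' _ _ fun i => Finset.sum_nonneg fun j _ => sq_nonneg _]

lemma exists_balanced {d : ℕ} (hd : 1 ≤ d) {m : Fin d → ℕ}
    {S : EuclideanSpace ℝ (∀ i, Fin (m i))}
    (hS : ∃ x, S = tMap m x) {R : ℝ} (hR : ‖S‖ ≤ R) :
    ∃ x, (∀ i j, |x i j| ≤ max R 1) ∧ tMap m x = S := by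
  obtain ⟨x, rfl⟩ := hS
  by_cases h0 : tMap m x = 0
  · refine ⟨0, fun i j => by simpa using le_max_right R 1, ?_⟩
    rw [h0]
    refine WithLp.ofLp_injective 2 (funext fun idx => ?_)
    rw [tMap_apply]
    exact Finset.prod_eq_zero (Finset.mem_univ ⟨0, hd⟩) rfl
  · set ν : Fin d → ℝ := fun i => Real.sqrt (∑ j, x i j ^ 2) with hν
    have hνnn : ∀ i, 0 ≤ ν i := fun i => Real.sqrt_nonneg _
    have hnorm : ‖tMap m x‖ = ∏ i, ν i := tMap_norm m x
    have hspos : 0 < ‖tMap m x‖ := norm_pos_iff.mpr h0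
    have hνpos : ∀ i, 0 < ν i := by
      intro i
      rcases (hνnn i).lt_or_eq with h | h
      · exact h
      · exfalso
        have : (∏ i, ν i) ≠ 0 := by rw [← hnorm]; positivity
        exact (Finset.prod_ne_zero_iff.mp this i (Finset.mem_univ i)) h.symm
    set r : ℝ := ‖tMap m x‖ ^ ((d : ℝ)⁻¹) with hr
    have hrpos : 0 < r := Real.rpow_pos_of_pos hspos _
    have hrd : r ^ d = ‖tMap m x‖ := by
      rw [hr, ← Real.rpow_natCast (_ ^ _) d, ← Real.rpow_mul hspos.le,
        inv_mul_cancel₀ (show (d:ℝ) ≠ 0 by exact_mod_cast Nat.one_le_iff_ne_zero.mp hd),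
        Real.rpow_one]
    refine ⟨fun i j => (r / ν i) * x i j, ?_, ?_⟩
    · intro i j
      have hxb : |x i j| ≤ ν i := by
        rw [hν, ← Real.sqrt_sq_eq_abs]
        exact Real.sqrt_le_sqrt (Finset.single_le_sum (fun j _ => sq_nonneg (x i j))
          (Finset.mem_univ j))
      have h1 : |(r / ν i) * x i j| ≤ r := by
        rw [abs_mul, abs_of_pos (div_pos hrpos (hνpos i))]
        calc r / ν i * |x i j| ≤ r / ν i * ν i :=
              mul_le_mul_of_nonneg_left hxb (div_pos hrpos (hνpos i)).le
          _ = r := div_mul_cancel₀ r (hνpos i).ne'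
      refine h1.trans ?_
      rcases le_total (‖tMap m x‖) 1 with h | h
      · exact le_trans (Real.rpow_le_one hspos.le h (by positivity)) (le_max_right R 1)
      · refine le_trans (le_trans ?_ hR) (le_max_left R 1)
        calc r ≤ ‖tMap m x‖ ^ (1:ℝ) := by
              refine Real.rpow_le_rpow_of_exponent_le h ?_
              rw [inv_le_one_iff₀]
              right
              exact_mod_cast hd
          _ = ‖tMap m x‖ := Real.rpow_one _
    · refine WithLp.ofLp_injective 2 (funext fun idx => ?_)
      rw [tMap_apply, tMap_apply, Finset.prod_mul_distrib]
      have : ∏ i, r / ν i = 1 := by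
        rw [Finset.prod_div_distrib, Finset.prod_const, Finset.card_univ, Fintype.card_fin,
          hrd, ← hnorm]
        exact div_self hspos.ne'
      rw [this, one_mul]

lemma isClosed_rankOneSet {d : ℕ} (hd : 1 ≤ d) (m : Fin d → ℕ) :
    IsClosed (rankOneSet m) := by
  refine isClosed_of_closure_subset fun z hz => ?_
  set R := ‖z‖ + 1 with hR
  set B := max R 1 with hB
  set K : Set (∀ i, Fin (m i) → ℝ) :=
    Set.univ.pi fun i => Set.univ.pi fun j => Set.Icc (-B) B with hK
  have hKc : IsCompact K :=
    isCompact_univ_pi fun i => isCompact_univ_pi fun j => isCompact_Icc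
  have himg : IsCompact (tMap m '' K) := hKc.image (tMap_continuous m)
  have hsub : rankOneSet m ∩ Metric.ball z 1 ⊆ tMap m '' K := by
    rintro S ⟨hS, hSb⟩
    have hSn : ‖S‖ ≤ R := by
      have h1 := norm_sub_norm_le S z
      have h2 : dist S z < 1 := Metric.mem_ball.mp hSb
      rw [dist_eq_norm] at h2
      rw [hR]; linarith
    obtain ⟨x, hx1, hx2⟩ := exists_balanced hd (mem_rankOneSet_iff.mp hS) hSn
    refine ⟨x, ?_, hx2⟩
    rw [hK]
    intro i _
    intro j _
    exact abs_le.mp (hx1 i j)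
  have hz' : z ∈ closure (rankOneSet m ∩ Metric.ball z 1) := by
    rw [mem_closure_iff_nhds] at hz ⊢
    intro t ht
    obtain ⟨w, hw1, hw2⟩ :=
      hz (t ∩ Metric.ball z 1) (Filter.inter_mem ht (Metric.ball_mem_nhds z one_pos))
    exact ⟨w, hw1.1, hw2, hw1.2⟩
  have hmem : z ∈ tMap m '' K := himg.isClosed.closure_subset (closure_mono hsub hz')
  obtain ⟨x, -, rfl⟩ := hmem
  exact ⟨x, fun idx => rfl⟩

lemma zero_mem_rankOneSet {d : ℕ} (hd : 1 ≤ d) (m : Fin d → ℕ) :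
    (0 : EuclideanSpace ℝ (∀ i, Fin (m i))) ∈ rankOneSet m := by
  refine ⟨0, fun idx => ?_⟩
  exact (Finset.prod_eq_zero (Finset.mem_univ ⟨0, hd⟩) rfl).symm

end Tensor

/-- Lebesgue-almost every real `d`-mode tensor has a unique best rank one
approximation in the Hilbert–Schmidt norm. -/
theorem ae_unique_best_rank_one_approx
    {d : ℕ} (hd : 1 ≤ d) (m : Fin d → ℕ) (hm : ∀ i, 1 ≤ m i) :
    ∀ᵐ T ∂(volume : Measure (EuclideanSpace ℝ (∀ i, Fin (m i)))),
      ∃! S, S ∈ rankOneSet m ∧ dist T S = Metric.infDist T (rankOneSet m) := by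
  have hcl := isClosed_rankOneSet hd m
  have hne : (rankOneSet m).Nonempty := ⟨0, zero_mem_rankOneSet hd m⟩
  have hlip := lipschitz_infDist_pt (rankOneSet m)
  filter_upwards [hlip.ae_differentiableAt
    (μ := (volume : Measure (EuclideanSpace ℝ (∀ i, Fin (m i)))))] with T hT
  obtain ⟨y, hy, hdist⟩ := hcl.exists_infDist_eq_dist hne T
  refine ⟨y, ⟨hy, hdist.symm⟩, ?_⟩
  rintro S' ⟨hS', he'⟩
  exact nearest_unique hT hS' hy he' hdist.symm
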